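/- For α > -1 and q, p ∈ ℤ_+, the orthogonality relation ∫_0^∞ e^{-t} t^α L_q^{(α)}(t) L_p^{(α)}(t) dt = Γ(α+1) · C(q+α, q) · δ_{qp} holds, where C(q+α,q) = Γ(q+α+1)/(Γ(α+1)·q!). -/

import Mathlib

open scoped BigOperators

/-- The generalized Laguerre polynomial
`L_q^{(α)}(t) = ∑_{i=0}^q (-1)^i / i! * ((α+i+1)⋯(α+q) / (q-i)!) * t^i`. -/
noncomputable def genLaguerre (q : ℕ) (α : ℝ) (t : ℝ) : ℝ :=
  ∑ i ∈ Finset.range (q + 1),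
    (-1 : ℝ) ^ i / (Nat.factorial i) *
      ((∏ j ∈ Finset.range (q - i), (α + i + 1 + j)) / (Nat.factorial (q - i))) * t ^ i

open Finset

lemma myGamma_add_nat (x : ℝ) (hx : 0 < x) (n : ℕ) :
    Real.Gamma (x + n) = Real.Gamma x * ∏ m ∈ range n, (x + m) := by
  induction n with
  | zero => simp
  | succ n ih =>
    have h1 : x + ((n : ℕ) + 1 : ℕ) = (x + n) + 1 := by push_cast; ring
    rw [h1, Real.Gamma_add_one (by positivity), ih, prod_range_succ]
    ring

lemma alt_sum_succ (p : ℕ) (f : ℕ → ℝ) :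
    ∑ j ∈ range (p + 2), (-1 : ℝ) ^ j * ((p + 1).choose j) * f j
      = ∑ j ∈ range (p + 1), (-1 : ℝ) ^ j * (p.choose j) * (f j - f (j + 1)) := by
  have h1 : ∀ j, ((p + 1).choose (j + 1) : ℝ) = p.choose j + p.choose (j + 1) := by
    intro j; rw [Nat.choose_succ_succ]; push_cast; ring
  rw [Finset.sum_range_succ' _ (p + 1)]
  have h2 : ∑ j ∈ range (p + 1), (-1 : ℝ) ^ (j + 1) * ((p + 1).choose (j + 1)) * f (j + 1)
      = ∑ j ∈ range (p + 1), ((-1 : ℝ) ^ (j+1) * (p.choose j) * f (j + 1)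
        + (-1 : ℝ) ^ (j+1) * (p.choose (j + 1)) * f (j + 1)) := by
    refine Finset.sum_congr rfl fun j _ => ?_
    rw [h1]; ring
  rw [h2, Finset.sum_add_distrib]
  have h3 : ∑ j ∈ range (p + 1), (-1 : ℝ) ^ (j + 1) * (p.choose (j + 1)) * f (j + 1)
      = (∑ j ∈ range (p + 2), (-1 : ℝ) ^ j * (p.choose j) * f j) - f 0 := by
    rw [Finset.sum_range_succ' (fun j => (-1 : ℝ) ^ j * (p.choose j) * f j) (p + 1)]
    simp
  have h4 : ∑ j ∈ range (p + 2), (-1 : ℝ) ^ j * (p.choose j) * f j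
      = ∑ j ∈ range (p + 1), (-1 : ℝ) ^ j * (p.choose j) * f j := by
    rw [Finset.sum_range_succ]
    simp [Nat.choose_eq_zero_of_lt (by omega : p < p + 1)]
  rw [h3, h4]
  have h6 : ∑ j ∈ range (p + 1), (-1 : ℝ) ^ j * (p.choose j) * (f j - f (j + 1))
      = ∑ j ∈ range (p + 1), ((-1 : ℝ) ^ j * (p.choose j) * f j
        + (-1 : ℝ) ^ (j + 1) * (p.choose j) * f (j + 1)) := by
    refine Finset.sum_congr rfl fun j _ => ?_; ring
  rw [h6, Finset.sum_add_distrib]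
  simp only [Nat.choose_zero_right, Nat.cast_one, pow_zero, one_mul]
  ring

lemma key_sum : ∀ (p : ℕ) (x : ℝ) (k : ℕ), k ≤ p →
    ∑ j ∈ range (p + 1), (-1 : ℝ) ^ j * (p.choose j) * (∏ m ∈ range k, (x + j + m))
      = if k = p then (-1 : ℝ) ^ p * p.factorial else 0 := by
  intro p
  induction p with
  | zero =>
    intro x k hk
    interval_cases k
    simp
  | succ p ih =>
    intro x k hk
    have hssucc : p + 1 + 1 = p + 2 := rfl
    rw [hssucc, alt_sum_succ]
    cases k with
    | zero =>
      simp only [range_zero, prod_empty, sub_self, mul_zero, Finset.sum_const_zero]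
      simp [Nat.succ_ne_zero]
    | succ k' =>
      have hdiff : ∀ j : ℕ,
          (∏ m ∈ range (k' + 1), (x + j + m)) - (∏ m ∈ range (k' + 1), (x + (j + 1 : ℕ) + m))
          = -((k' : ℝ) + 1) * ∏ m ∈ range k', ((x + 1) + j + m) := by
        intro j
        have e1 : (∏ m ∈ range (k' + 1), (x + j + m))
            = (∏ m ∈ range k', ((x + 1) + j + m)) * (x + j) := by
          rw [Finset.prod_range_succ']
          congr 1
          · refine Finset.prod_congr rfl fun m _ => ?_
            push_cast; ring
          · push_cast; ring
        have e2 : (∏ m ∈ range (k' + 1), (x + (j + 1 : ℕ) + m))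
            = (∏ m ∈ range k', ((x + 1) + j + m)) * (x + j + 1 + k') := by
          rw [Finset.prod_range_succ]
          congr 1
          · refine Finset.prod_congr rfl fun m _ => ?_
            push_cast; ring
          · push_cast; ring
        rw [e1, e2]; ring
      have hsum : ∑ j ∈ range (p + 1), (-1 : ℝ) ^ j * (p.choose j) *
          ((∏ m ∈ range (k' + 1), (x + j + m)) - (∏ m ∈ range (k' + 1), (x + (j + 1 : ℕ) + m)))
          = -((k' : ℝ) + 1) * ∑ j ∈ range (p + 1), (-1 : ℝ) ^ j * (p.choose j) *
            (∏ m ∈ range k', ((x + 1) + j + m)) := by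
        rw [Finset.mul_sum]
        refine Finset.sum_congr rfl fun j _ => ?_
        rw [hdiff j]; ring
      have : ∀ j : ℕ, ((j : ℝ) + 1) = ((j + 1 : ℕ) : ℝ) := by intro j; push_cast; ring
      simp only [this] at hsum ⊢
      rw [hsum, ih (x + 1) k' (by omega)]
      by_cases h : k' = p
      · subst h
        simp [Nat.factorial_succ]
        push_cast; ring
      · have : ¬ (k' + 1 = p + 1) := by omega
        simp [h, this]

open MeasureTheory in
lemma int_gamma (β : ℝ) (hβ : -1 < β) :
    ∫ t in Set.Ioi (0 : ℝ), Real.exp (-t) * t ^ β = Real.Gamma (β + 1) := by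
  rw [Real.Gamma_eq_integral (by linarith : (0:ℝ) < β + 1)]
  norm_num

open MeasureTheory in
lemma laguerre_int_of_le (α : ℝ) (hα : -1 < α) (q p : ℕ) (hqp : q ≤ p) :
    ∫ t in Set.Ioi (0 : ℝ),
        Real.exp (-t) * t ^ α * genLaguerre q α t * genLaguerre p α t
      = if q = p then Real.Gamma (α + p + 1) / p.factorial else 0 := by
  set c : ℕ → ℕ → ℝ := fun n i =>
    (-1 : ℝ) ^ i / (Nat.factorial i) *
      ((∏ j ∈ Finset.range (n - i), (α + i + 1 + j)) / (Nat.factorial (n - i))) with hc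
  have hgen : ∀ n t, genLaguerre n α t = ∑ i ∈ range (n + 1), c n i * t ^ i := by
    intro n t; simp only [genLaguerre, hc]
  have hInt : ∀ i j : ℕ,
      IntegrableOn (fun t : ℝ => Real.exp (-t) * t ^ (α + ((i + j : ℕ) : ℝ))) (Set.Ioi 0) := by
    intro i j
    have h0 : (0:ℝ) < α + ((i + j : ℕ) : ℝ) + 1 := by
      have : (0:ℝ) ≤ ((i + j : ℕ) : ℝ) := Nat.cast_nonneg _
      linarith
    have := Real.GammaIntegral_convergent h0
    simpa using this
  have expand : ∀ t ∈ Set.Ioi (0:ℝ),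
      Real.exp (-t) * t ^ α * genLaguerre q α t * genLaguerre p α t
        = ∑ i ∈ range (q + 1), ∑ j ∈ range (p + 1),
            c q i * c p j * (Real.exp (-t) * t ^ (α + ((i + j : ℕ) : ℝ))) := by
    intro t ht
    have ht' : (0:ℝ) < t := ht
    rw [hgen, hgen]
    rw [show Real.exp (-t) * t ^ α * (∑ i ∈ range (q + 1), c q i * t ^ i) *
          (∑ j ∈ range (p + 1), c p j * t ^ j)
        = (Real.exp (-t) * t ^ α) * ((∑ i ∈ range (q + 1), c q i * t ^ i) *
          (∑ j ∈ range (p + 1), c p j * t ^ j)) from by ring]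
    rw [Finset.sum_mul_sum, Finset.mul_sum]
    refine Finset.sum_congr rfl fun i _ => ?_
    rw [Finset.mul_sum]
    refine Finset.sum_congr rfl fun j _ => ?_
    rw [Real.rpow_add ht', Real.rpow_natCast, pow_add]
    ring
  rw [setIntegral_congr_fun measurableSet_Ioi expand]
  rw [integral_finset_sum _
    (fun i _ => integrable_finset_sum _ (fun j _ => ((hInt i j).const_mul _)))]
  have step2 : ∀ i ∈ range (q + 1),
      ∫ t in Set.Ioi (0 : ℝ), ∑ j ∈ range (p + 1),
          c q i * c p j * (Real.exp (-t) * t ^ (α + ((i + j : ℕ) : ℝ)))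
        = ∑ j ∈ range (p + 1), c q i * c p j * Real.Gamma (α + ((i + j : ℕ) : ℝ) + 1) := by
    intro i _
    rw [integral_finset_sum _ (fun j _ => ((hInt i j).const_mul _))]
    refine Finset.sum_congr rfl fun j _ => ?_
    rw [MeasureTheory.integral_const_mul, int_gamma _ (by
      have : (0:ℝ) ≤ ((i + j : ℕ) : ℝ) := Nat.cast_nonneg _
      linarith)]
  rw [Finset.sum_congr rfl step2]
  have inner : ∀ i, i ≤ p →
      ∑ j ∈ range (p + 1), c p j * Real.Gamma (α + ((i + j : ℕ) : ℝ) + 1)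
        = Real.Gamma (α + p + 1) / p.factorial *
            (if i = p then (-1 : ℝ) ^ p * p.factorial else 0) := by
    intro i hi
    have hterm : ∀ j ∈ range (p + 1), c p j * Real.Gamma (α + ((i + j : ℕ) : ℝ) + 1)
        = Real.Gamma (α + p + 1) / p.factorial *
            ((-1 : ℝ) ^ j * (p.choose j) * ∏ m ∈ range i, ((α + 1) + j + m)) := by
      intro j hj
      have hj' : j ≤ p := by
        have := Finset.mem_range.mp hj; omega
      have hpos : (0:ℝ) < α + j + 1 := by
        have : (0:ℝ) ≤ (j:ℝ) := Nat.cast_nonneg _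
        linarith
      have h1 : Real.Gamma (α + ((i + j : ℕ) : ℝ) + 1)
          = Real.Gamma (α + j + 1) * ∏ m ∈ range i, ((α + 1) + j + m) := by
        have he : α + ((i + j : ℕ) : ℝ) + 1 = (α + j + 1) + (i : ℕ) := by push_cast; ring
        rw [he, myGamma_add_nat _ hpos i]
        congr 1
        exact Finset.prod_congr rfl fun m _ => by ring
      have h2 : Real.Gamma (α + j + 1) * ∏ m ∈ range (p - j), (α + j + 1 + m)
          = Real.Gamma (α + p + 1) := by
        rw [← myGamma_add_nat (α + j + 1) hpos (p - j)]
        congr 1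
        rw [Nat.cast_sub hj']
        ring
      have h3 : ((p.choose j : ℝ)) * (j.factorial) * (((p - j).factorial)) = p.factorial := by
        exact_mod_cast congrArg (Nat.cast (R := ℝ)) (Nat.choose_mul_factorial_mul_factorial hj')
      have hfj : ((j.factorial : ℕ) : ℝ) ≠ 0 := Nat.cast_ne_zero.mpr (Nat.factorial_ne_zero _)
      have hfpj : (((p - j).factorial : ℕ) : ℝ) ≠ 0 := Nat.cast_ne_zero.mpr (Nat.factorial_ne_zero _)
      have hfp : ((p.factorial : ℕ) : ℝ) ≠ 0 := Nat.cast_ne_zero.mpr (Nat.factorial_ne_zero _)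
      have hC : ((p.choose j : ℕ) : ℝ) ≠ 0 :=
        Nat.cast_ne_zero.mpr (Nat.choose_pos hj').ne'
      simp only [hc]
      rw [h1, ← h2, ← h3]
      generalize Real.Gamma (α + ↑j + 1) = G
      generalize (∏ m ∈ range (p - j), (α + ↑j + 1 + ↑m)) = P
      generalize (∏ m ∈ range i, (α + 1 + ↑j + ↑m)) = Q
      field_simp
    rw [Finset.sum_congr rfl hterm, ← Finset.mul_sum, key_sum p (α + 1) i hi]
  have inner' : ∀ i ∈ range (q + 1),
      ∑ j ∈ range (p + 1), c q i * c p j * Real.Gamma (α + ((i + j : ℕ) : ℝ) + 1)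
        = if i = p then c q i * (Real.Gamma (α + p + 1) / p.factorial *
            ((-1 : ℝ) ^ p * p.factorial)) else 0 := by
    intro i hi
    have hi' : i ≤ p := by
      have := Finset.mem_range.mp hi; omega
    rw [show ∑ j ∈ range (p + 1), c q i * c p j * Real.Gamma (α + ((i + j : ℕ) : ℝ) + 1)
        = c q i * ∑ j ∈ range (p + 1), c p j * Real.Gamma (α + ((i + j : ℕ) : ℝ) + 1) from by
      rw [Finset.mul_sum]; exact Finset.sum_congr rfl fun j _ => by ring]
    rw [inner i hi']
    by_cases h : i = p <;> simp [h]
  rw [Finset.sum_congr rfl inner', Finset.sum_ite_eq' (range (q + 1)) p]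
  by_cases h : q = p
  · subst h
    simp only [Finset.mem_range, lt_add_iff_pos_right, Nat.lt_one_iff, if_pos (by omega : q < q + 1), if_pos rfl]
    have hcqq : c q q = (-1 : ℝ) ^ q / q.factorial := by
      simp [hc]
    rw [hcqq]
    simp only [↓reduceIte]
    have hfq : ((q.factorial : ℕ) : ℝ) ≠ 0 := Nat.cast_ne_zero.mpr (Nat.factorial_ne_zero _)
    field_simp
    have hone : (-1:ℝ)^q * (-1:ℝ)^q = 1 := by rw [← mul_pow]; norm_num
    linear_combination (Real.Gamma (α + ↑q + 1)) * hone
  · have : p ∉ range (q + 1) := by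
      simp only [Finset.mem_range]; omega
    rw [if_neg this, if_neg h]

open MeasureTheory in
theorem laguerre_orthogonality (α : ℝ) (hα : -1 < α) (q p : ℕ) :
    ∫ t in Set.Ioi (0 : ℝ),
        Real.exp (-t) * t ^ α * genLaguerre q α t * genLaguerre p α t =
      Real.Gamma (α + 1) *
        (Real.Gamma ((q : ℝ) + α + 1) / (Real.Gamma (α + 1) * Nat.factorial q)) *
        (if q = p then 1 else 0) := by
  have hΓ : Real.Gamma (α + 1) ≠ 0 := (Real.Gamma_pos_of_pos (by linarith)).ne'
  rcases le_or_gt q p with h | h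
  · rw [laguerre_int_of_le α hα q p h]
    by_cases hq : q = p
    · subst hq
      rw [if_pos rfl, if_pos rfl, mul_one,
        show α + (q : ℝ) + 1 = (q : ℝ) + α + 1 from by ring]
      have hfq : ((q.factorial : ℕ) : ℝ) ≠ 0 := Nat.cast_ne_zero.mpr (Nat.factorial_ne_zero _)
      field_simp
    · rw [if_neg hq, if_neg hq, mul_zero]
  · have hswap : ∀ t : ℝ,
        Real.exp (-t) * t ^ α * genLaguerre q α t * genLaguerre p α t
          = Real.exp (-t) * t ^ α * genLaguerre p α t * genLaguerre q α t := fun t => by ring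
    simp_rw [hswap]
    rw [laguerre_int_of_le α hα p q h.le, if_neg (by omega : ¬ p = q),
      if_neg (by omega : ¬ q = p), mul_zero]
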